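/- If t ↦ σ_t is a C¹ curve of positive definite Hermitian matrices on a finite-dimensional complex Hilbert space, then d/dt log σ_t = T_{σ_t}(σ̇_t), where T_σ(X) = ∫₀^∞ (σ + s·1)⁻¹ X (σ + s·1)⁻¹ ds. -/

import Mathlib

open Matrix MeasureTheory Set Filter
open scoped ComplexOrder Topology

/-- `T_σ(X) = ∫₀^∞ (σ + s·1)⁻¹ X (σ + s·1)⁻¹ ds`, defined entrywise. -/
noncomputable def Tmap {n : ℕ} (σ X : Matrix (Fin n) (Fin n) ℂ) : Matrix (Fin n) (Fin n) ℂ :=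
  Matrix.of fun i j =>
    ∫ s in Set.Ioi (0 : ℝ),
      ((σ + (s : ℂ) • (1 : Matrix (Fin n) (Fin n) ℂ))⁻¹ * X
        * (σ + (s : ℂ) • (1 : Matrix (Fin n) (Fin n) ℂ))⁻¹) i j

/-- Matrix logarithm of a Hermitian matrix via the continuous functional calculus. -/
noncomputable def mlog {n : ℕ} (M : Matrix (Fin n) (Fin n) ℂ) : Matrix (Fin n) (Fin n) ℂ :=
  cfc Real.log M


lemma integrableOn_inv_sq {c : ℝ} (hc : 0 < c) :
    IntegrableOn (fun s : ℝ => ((c + s) ^ 2)⁻¹) (Set.Ioi 0) := by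
  have key : ∀ x ∈ Set.Ici (0:ℝ), HasDerivAt (fun s : ℝ => -(c + s)⁻¹) (((c + x) ^ 2)⁻¹) x := by
    intro x hx
    have hx0 : (0:ℝ) ≤ x := hx
    have hne : c + x ≠ 0 := by linarith
    have h1 : HasDerivAt (fun s : ℝ => c + s) 1 x := (hasDerivAt_id x).const_add c
    have h2 := (h1.inv hne).neg
    refine HasDerivAt.congr_deriv h2 ?_
    ring
  refine integrableOn_Ioi_deriv_of_nonneg' (l := 0) key (fun x _ => by positivity) ?_
  have : Tendsto (fun s : ℝ => (c + s)⁻¹) atTop (nhds 0) :=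
    tendsto_inv_atTop_zero.comp (tendsto_atTop_add_const_left _ c tendsto_id)
  simpa using this.neg

lemma log_scalar {lam : ℝ} (hlam : 0 < lam) :
    IntegrableOn (fun s : ℝ => (1 + s)⁻¹ - (lam + s)⁻¹) (Set.Ioi 0) ∧
      ∫ s in Set.Ioi (0:ℝ), ((1 + s)⁻¹ - (lam + s)⁻¹) = Real.log lam := by
  set m : ℝ := min 1 lam with hm
  have hm0 : 0 < m := lt_min one_pos hlam
  have hint : IntegrableOn (fun s : ℝ => (1 + s)⁻¹ - (lam + s)⁻¹) (Set.Ioi 0) := by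
    have hb : IntegrableOn (fun s : ℝ => |1 - lam| * ((m + s) ^ 2)⁻¹) (Set.Ioi 0) :=
      (integrableOn_inv_sq hm0).const_mul _
    refine Integrable.mono' hb ?_ ?_
    · apply ContinuousOn.aestronglyMeasurable ?_ measurableSet_Ioi
      apply ContinuousOn.sub
      · exact (continuousOn_const.add continuousOn_id).inv₀ (fun x hx => by
          have : (0:ℝ) < x := hx; simp only [Pi.add_apply, id_eq]; positivity)
      · exact (continuousOn_const.add continuousOn_id).inv₀ (fun x hx => by
          have : (0:ℝ) < x := hx; simp only [Pi.add_apply, id_eq]; positivity)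
    · filter_upwards [ae_restrict_mem measurableSet_Ioi] with s hs
      have hs0 : (0:ℝ) < s := hs
      have h1 : (0:ℝ) < 1 + s := by linarith
      have h2 : (0:ℝ) < lam + s := by linarith
      have heq : (1 + s)⁻¹ - (lam + s)⁻¹ = (lam - 1) * ((1 + s) * (lam + s))⁻¹ := by
        rw [inv_sub_inv h1.ne' h2.ne', div_eq_mul_inv]
        ring_nf
      rw [heq]
      rw [Real.norm_eq_abs, abs_mul, abs_inv]
      have hmle1 : m ≤ 1 := min_le_left _ _
      have hmle2 : m ≤ lam := min_le_right _ _
      have hprod : (m + s) ^ 2 ≤ (1 + s) * (lam + s) := by nlinarith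
      have : |(1 + s) * (lam + s)| = (1 + s) * (lam + s) := abs_of_pos (by positivity)
      rw [this, abs_sub_comm]
      have : ((1 + s) * (lam + s))⁻¹ ≤ ((m + s) ^ 2)⁻¹ := by
        apply inv_anti₀ (by positivity) hprod
      exact mul_le_mul_of_nonneg_left this (abs_nonneg _)
  refine ⟨hint, ?_⟩
  have hderiv : ∀ x ∈ Set.Ici (0:ℝ),
      HasDerivAt (fun s : ℝ => Real.log (1 + s) - Real.log (lam + s))
        ((1 + x)⁻¹ - (lam + x)⁻¹) x := by
    intro x hx
    have hx0 : (0:ℝ) ≤ x := hx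
    have h1 : (0:ℝ) < 1 + x := by linarith
    have h2 : (0:ℝ) < lam + x := by linarith
    have d1 : HasDerivAt (fun s : ℝ => Real.log (1 + s)) ((1 + x)⁻¹) x := by
      have := (Real.hasDerivAt_log h1.ne').comp x ((hasDerivAt_id x).const_add 1)
      simpa [Function.comp_def] using this
    have d2 : HasDerivAt (fun s : ℝ => Real.log (lam + s)) ((lam + x)⁻¹) x := by
      have := (Real.hasDerivAt_log h2.ne').comp x ((hasDerivAt_id x).const_add lam)
      simpa [Function.comp_def] using this
    exact d1.sub d2
  have htend : Tendsto (fun s : ℝ => Real.log (1 + s) - Real.log (lam + s)) atTop (nhds 0) := by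
    have h1 : Tendsto (fun s : ℝ => 1 + (1 - lam) / (lam + s)) atTop (nhds 1) := by
      have : Tendsto (fun s : ℝ => (1 - lam) / (lam + s)) atTop (nhds 0) :=
        Tendsto.div_atTop tendsto_const_nhds (tendsto_atTop_add_const_left _ lam tendsto_id)
      simpa using tendsto_const_nhds.add this
    have h2 : Tendsto (fun s : ℝ => Real.log (1 + (1 - lam) / (lam + s))) atTop (nhds 0) := by
      have := (Real.continuousAt_log one_ne_zero).tendsto.comp h1
      simpa [Function.comp_def] using this
    refine h2.congr' ?_
    filter_upwards [eventually_gt_atTop 0] with s hs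
    have h1' : (0:ℝ) < 1 + s := by linarith
    have h2' : (0:ℝ) < lam + s := by linarith
    rw [show 1 + (1 - lam) / (lam + s) = (1 + s) / (lam + s) by field_simp; ring,
      Real.log_div h1'.ne' h2'.ne']
  have := integral_Ioi_of_hasDerivAt_of_tendsto' hderiv hint htend
  rw [this]
  simp [Real.log_one]

namespace MlogProof
variable {n : ℕ} {A : Matrix (Fin n) (Fin n) ℂ}
local notation "evU" hh => (Matrix.IsHermitian.eigenvectorUnitary hh : Matrix (Fin n) (Fin n) ℂ)
variable {n : ℕ}

lemma mul3_apply (X Y Z : Matrix (Fin n) (Fin n) ℂ) (i j : Fin n) :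
    (X * Y * Z) i j = ∑ l, ∑ k, X i k * Y k l * Z l j := by
  rw [Matrix.mul_apply]
  refine Finset.sum_congr rfl fun l _ => ?_
  rw [Matrix.mul_apply, Finset.sum_mul]

lemma conjUnit_entry (U : Matrix (Fin n) (Fin n) ℂ) (f : Fin n → ℂ) (i j : Fin n) :
    (U * Matrix.diagonal f * star U) i j = ∑ k, f k * (U i k * star (U j k)) := by
  rw [Matrix.mul_apply]
  refine Finset.sum_congr rfl fun k _ => ?_
  rw [Matrix.mul_diagonal, Matrix.star_apply]
  ring

variable {A : Matrix (Fin n) (Fin n) ℂ}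

local notation "evU" hh => (Matrix.IsHermitian.eigenvectorUnitary hh : Matrix (Fin n) (Fin n) ℂ)

lemma smul_one_eq (c : ℂ) (U : Matrix (Fin n) (Fin n) ℂ) (hU : U * star U = 1) :
    c • (1 : Matrix (Fin n) (Fin n) ℂ)
      = U * Matrix.diagonal (fun _ => c) * star U := by
  have h : Matrix.diagonal (fun _ : Fin n => c) = c • (1 : Matrix (Fin n) (Fin n) ℂ) := by
    ext i j
    by_cases hij : i = j <;>
      simp [Matrix.diagonal_apply, Matrix.one_apply, Matrix.smul_apply, hij]
  rw [h, mul_smul_comm, mul_one, Matrix.smul_mul, hU]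

lemma shift_spectral (hA : A.PosDef) (s : ℝ) :
    A + (s : ℂ) • (1 : Matrix (Fin n) (Fin n) ℂ)
      = (evU hA.1) * Matrix.diagonal (fun k => ((hA.1.eigenvalues k + s : ℝ) : ℂ))
          * star (evU hA.1) := by
  have hU1 : (evU hA.1) * star (evU hA.1) = 1 :=
    Matrix.mem_unitaryGroup_iff.mp (Matrix.IsHermitian.eigenvectorUnitary hA.1).2
  have hfun : (fun i => (RCLike.ofReal ∘ hA.1.eigenvalues) i + (s:ℂ))
      = fun k => ((hA.1.eigenvalues k + s : ℝ) : ℂ) := by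
    funext k
    rw [Function.comp_apply]
    push_cast
    rfl
  conv_lhs => rw [hA.1.spectral_theorem, Unitary.conjStarAlgAut_apply, smul_one_eq (s : ℂ) _ hU1]
  rw [← Matrix.add_mul, ← Matrix.mul_add, Matrix.diagonal_add, hfun]

lemma shift_mul_inv_eq_one (hA : A.PosDef) (s : ℝ) (hs : 0 ≤ s) :
    (A + (s : ℂ) • (1 : Matrix (Fin n) (Fin n) ℂ)) *
      ((evU hA.1) * Matrix.diagonal (fun k => (((hA.1.eigenvalues k + s : ℝ)) : ℂ)⁻¹)
        * star (evU hA.1)) = 1 := by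
  have hU1 : (evU hA.1) * star (evU hA.1) = 1 :=
    Matrix.mem_unitaryGroup_iff.mp (Matrix.IsHermitian.eigenvectorUnitary hA.1).2
  have hU2 : star (evU hA.1) * (evU hA.1) = 1 :=
    Matrix.mem_unitaryGroup_iff'.mp (Matrix.IsHermitian.eigenvectorUnitary hA.1).2
  have hdiag : (Matrix.diagonal fun k => ((hA.1.eigenvalues k + s : ℝ) : ℂ)) *
      (Matrix.diagonal fun k => (((hA.1.eigenvalues k + s : ℝ)) : ℂ)⁻¹) = 1 := by
    rw [Matrix.diagonal_mul_diagonal]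
    have : (fun k => ((hA.1.eigenvalues k + s : ℝ) : ℂ) * (((hA.1.eigenvalues k + s : ℝ)) : ℂ)⁻¹)
        = fun _ => (1 : ℂ) := by
      funext k
      have hk : (0:ℝ) < hA.1.eigenvalues k + s := by
        have := hA.eigenvalues_pos k; linarith
      exact mul_inv_cancel₀ (by exact_mod_cast hk.ne')
    rw [this, Matrix.diagonal_one]
  rw [shift_spectral hA s]
  simp only [Matrix.mul_assoc]
  rw [← Matrix.mul_assoc (star (evU hA.1)) (evU hA.1), hU2, Matrix.one_mul,
    ← Matrix.mul_assoc (Matrix.diagonal _) (Matrix.diagonal _), hdiag, Matrix.one_mul, hU1]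

lemma shift_inv (hA : A.PosDef) (s : ℝ) (hs : 0 ≤ s) :
    (A + (s : ℂ) • (1 : Matrix (Fin n) (Fin n) ℂ))⁻¹
      = (evU hA.1) * Matrix.diagonal (fun k => (((hA.1.eigenvalues k + s : ℝ)) : ℂ)⁻¹)
          * star (evU hA.1) :=
  Matrix.inv_eq_right_inv (shift_mul_inv_eq_one hA s hs)

lemma shift_mul_inv (hA : A.PosDef) (s : ℝ) (hs : 0 ≤ s) :
    (A + (s : ℂ) • (1 : Matrix (Fin n) (Fin n) ℂ)) *
      (A + (s : ℂ) • (1 : Matrix (Fin n) (Fin n) ℂ))⁻¹ = 1 := by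
  rw [shift_inv hA s hs]; exact shift_mul_inv_eq_one hA s hs


lemma star_dot_self (v : Fin n → ℂ) :
    star v ⬝ᵥ v = ((∑ i, Complex.normSq (v i) : ℝ) : ℂ) := by
  rw [dotProduct]
  push_cast
  refine Finset.sum_congr rfl fun k _ => ?_
  rw [Pi.star_apply, RCLike.star_def, mul_comm, Complex.mul_conj]

lemma quad_eigen (hA : A.PosDef) (x : Fin n → ℂ) :
    (star x ⬝ᵥ A *ᵥ x).re
      = ∑ k, hA.1.eigenvalues k * Complex.normSq ((star (evU hA.1) *ᵥ x) k) := by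
  set U : Matrix (Fin n) (Fin n) ℂ := evU hA.1 with hUdef
  set y : Fin n → ℂ := star U *ᵥ x with hy
  have hstary : star y = star x ᵥ* U := by
    rw [hy, Matrix.star_mulVec, Matrix.star_eq_conjTranspose, Matrix.conjTranspose_conjTranspose]
  have h1 : A *ᵥ x = U *ᵥ (Matrix.diagonal (RCLike.ofReal ∘ hA.1.eigenvalues) *ᵥ y) := by
    conv_lhs => rw [hA.1.spectral_theorem, Unitary.conjStarAlgAut_apply]
    rw [Matrix.mulVec_mulVec, hy, Matrix.mulVec_mulVec]
  have h2 : star x ⬝ᵥ A *ᵥ x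
      = ((∑ k, hA.1.eigenvalues k * Complex.normSq (y k) : ℝ) : ℂ) := by
    rw [h1, Matrix.dotProduct_mulVec, ← hstary, dotProduct]
    push_cast
    refine Finset.sum_congr rfl fun k _ => ?_
    rw [Matrix.mulVec_diagonal, Pi.star_apply]
    simp only [RCLike.star_def]
    rw [Function.comp_apply]
    have hco : (RCLike.ofReal (hA.1.eigenvalues k) : ℂ) = ((hA.1.eigenvalues k : ℝ) : ℂ) := rfl
    rw [hco]
    push_cast
    rw [← Complex.mul_conj]
    ring
  rw [h2, Complex.ofReal_re]

lemma norm_preserved (hA : A.PosDef) (x : Fin n → ℂ) :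
    ∑ k, Complex.normSq ((star (evU hA.1) *ᵥ x) k) = ∑ i, Complex.normSq (x i) := by
  set U : Matrix (Fin n) (Fin n) ℂ := evU hA.1 with hUdef
  set y : Fin n → ℂ := star U *ᵥ x with hy
  have hU1 : U * star U = 1 :=
    Matrix.mem_unitaryGroup_iff.mp (Matrix.IsHermitian.eigenvectorUnitary hA.1).2
  have hstary : star y = star x ᵥ* U := by
    rw [hy, Matrix.star_mulVec, Matrix.star_eq_conjTranspose, Matrix.conjTranspose_conjTranspose]
  have key : star y ⬝ᵥ y = star x ⬝ᵥ x := by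
    rw [hstary, hy, ← Matrix.dotProduct_mulVec, Matrix.mulVec_mulVec, hU1, Matrix.one_mulVec]
  rw [star_dot_self, star_dot_self] at key
  exact_mod_cast key

lemma quad_lower (hA : A.PosDef) (c : ℝ) (hc : ∀ k, c ≤ hA.1.eigenvalues k) (x : Fin n → ℂ) :
    c * ∑ i, Complex.normSq (x i) ≤ (star x ⬝ᵥ A *ᵥ x).re := by
  rw [quad_eigen hA x, ← norm_preserved hA x, Finset.mul_sum]
  exact Finset.sum_le_sum fun k _ =>
    mul_le_mul_of_nonneg_right (hc k) (Complex.normSq_nonneg _)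

lemma quad_pert (Δ : Matrix (Fin n) (Fin n) ℂ) (x : Fin n → ℂ) :
    |(star x ⬝ᵥ Δ *ᵥ x).re|
      ≤ (∑ p : Fin n × Fin n, ‖Δ p.1 p.2‖) * ∑ i, Complex.normSq (x i) := by
  set S : ℝ := ∑ i, Complex.normSq (x i) with hS
  have hS0 : 0 ≤ S := Finset.sum_nonneg fun _ _ => Complex.normSq_nonneg _
  have hxa : ∀ a, ‖x a‖ ≤ Real.sqrt S := by
    intro a
    rw [Complex.norm_def]
    exact Real.sqrt_le_sqrt
      (Finset.single_le_sum (fun _ _ => Complex.normSq_nonneg _) (Finset.mem_univ a))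
  have hterm : star x ⬝ᵥ Δ *ᵥ x = ∑ a, ∑ b, star (x a) * Δ a b * x b := by
    rw [dotProduct]
    refine Finset.sum_congr rfl fun a _ => ?_
    rw [Matrix.mulVec, dotProduct, Finset.mul_sum]
    refine Finset.sum_congr rfl fun b _ => ?_
    rw [Pi.star_apply]; ring
  calc |(star x ⬝ᵥ Δ *ᵥ x).re| ≤ ‖star x ⬝ᵥ Δ *ᵥ x‖ := Complex.abs_re_le_norm _
    _ ≤ ∑ a, ∑ b, ‖star (x a) * Δ a b * x b‖ := by
        rw [hterm]
        refine le_trans (norm_sum_le _ _) (Finset.sum_le_sum fun a _ => ?_)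
        exact norm_sum_le _ _
    _ ≤ ∑ a, ∑ b, ‖Δ a b‖ * S := by
        refine Finset.sum_le_sum fun a _ => Finset.sum_le_sum fun b _ => ?_
        rw [norm_mul, norm_mul]
        have h1 : ‖star (x a)‖ = ‖x a‖ := by
          rw [RCLike.star_def, Complex.norm_conj]
        rw [h1, show ‖x a‖ * ‖Δ a b‖ * ‖x b‖
            = ‖Δ a b‖ * (‖x a‖ * ‖x b‖) by ring]
        refine mul_le_mul_of_nonneg_left ?_ (norm_nonneg _)
        calc ‖x a‖ * ‖x b‖
            ≤ Real.sqrt S * Real.sqrt S :=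
              mul_le_mul (hxa a) (hxa b) (norm_nonneg _) (Real.sqrt_nonneg _)
          _ = S := Real.mul_self_sqrt hS0
    _ = (∑ p : Fin n × Fin n, ‖Δ p.1 p.2‖) * S := by
        rw [Fintype.sum_prod_type, Finset.sum_mul]
        exact Finset.sum_congr rfl fun a _ => by rw [Finset.sum_mul]

lemma inv_entry_bound {B : Matrix (Fin n) (Fin n) ℂ} (hAB : A * B = 1) {c : ℝ} (hc : 0 < c)
    (hq : ∀ x : Fin n → ℂ, c * ∑ i, Complex.normSq (x i) ≤ (star x ⬝ᵥ A *ᵥ x).re)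
    (i j : Fin n) : ‖B i j‖ ≤ c⁻¹ := by
  set x : Fin n → ℂ := B *ᵥ Pi.single j 1 with hx
  have hAx : A *ᵥ x = Pi.single j 1 := by
    rw [hx, Matrix.mulVec_mulVec, hAB, Matrix.one_mulVec]
  set S : ℝ := ∑ i, Complex.normSq (x i) with hS
  have hS0 : 0 ≤ S := Finset.sum_nonneg fun _ _ => Complex.normSq_nonneg _
  have h2 : c * S ≤ (x j).re := by
    have := hq x
    rw [hAx, dotProduct_single, mul_one, Pi.star_apply, RCLike.star_def,
      Complex.conj_re] at this
    exact this
  have hxa : ∀ a, ‖x a‖ ≤ Real.sqrt S := by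
    intro a
    rw [Complex.norm_def]
    exact Real.sqrt_le_sqrt
      (Finset.single_le_sum (fun _ _ => Complex.normSq_nonneg _) (Finset.mem_univ a))
  have h3 : c * S ≤ Real.sqrt S :=
    le_trans h2 (le_trans (Complex.re_le_norm _) (hxa j))
  have hsqrt : Real.sqrt S ≤ c⁻¹ := by
    rcases eq_or_lt_of_le hS0 with h | h
    · rw [← h]; simp; positivity
    · have hr : 0 < Real.sqrt S := Real.sqrt_pos.mpr h
      have hsq : Real.sqrt S * Real.sqrt S = S := Real.mul_self_sqrt hS0
      have hci : c * c⁻¹ = 1 := mul_inv_cancel₀ hc.ne'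
      nlinarith [mul_pos hc hr, hci, hsq, h3]
  have hBx : B i j = x i := by
    rw [hx, Matrix.mulVec_single]
    simp
  rw [hBx]
  exact le_trans (hxa i) hsqrt


lemma continuousAt_inv_entry {B : ℝ → Matrix (Fin n) (Fin n) ℂ} (hcont : Continuous B)
    {t₀ : ℝ} (hdet : (B t₀).det ≠ 0) (k l : Fin n) :
    ContinuousAt (fun u => (B u)⁻¹ k l) t₀ := by
  have heq : (fun u => (B u)⁻¹ k l) = fun u => ((B u).det)⁻¹ * (B u).adjugate k l := by
    funext u
    rw [Matrix.inv_def, Matrix.smul_apply, smul_eq_mul, Ring.inverse_eq_inv']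
  rw [heq]
  exact ((hcont.matrix_det.continuousAt).inv₀ hdet).mul
    (((continuous_apply l).comp ((continuous_apply k).comp hcont.matrix_adjugate)).continuousAt)

lemma hasDerivAt_inv_entry (B : ℝ → Matrix (Fin n) (Fin n) ℂ) (B' : Matrix (Fin n) (Fin n) ℂ)
    (t₀ : ℝ) (hcont : Continuous B)
    (hd : ∀ k l : Fin n, HasDerivAt (fun u => B u k l) (B' k l) t₀)
    (hunit : ∀ u, B u * (B u)⁻¹ = 1) (i j : Fin n) :
    HasDerivAt (fun u => (B u)⁻¹ i j) (-((B t₀)⁻¹ * B' * (B t₀)⁻¹) i j) t₀ := by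
  have hunit' : ∀ u, (B u)⁻¹ * B u = 1 := fun u => mul_eq_one_comm.mp (hunit u)
  have hdet : ∀ u, (B u).det ≠ 0 := fun u =>
    left_ne_zero_of_mul_eq_one (by rw [← Matrix.det_mul, hunit u, Matrix.det_one])
  rw [hasDerivAt_iff_tendsto_slope]
  have h2 : Tendsto (fun u => -(∑ l, ∑ k,
        (B u)⁻¹ i k * ((u - t₀)⁻¹ • (B u - B t₀)) k l * (B t₀)⁻¹ l j))
      (𝓝[≠] t₀) (𝓝 (-((B t₀)⁻¹ * B' * (B t₀)⁻¹) i j)) := by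
    rw [mul3_apply]
    apply Tendsto.neg
    refine tendsto_finset_sum _ fun l _ => tendsto_finset_sum _ fun k _ => ?_
    have ha : Tendsto (fun u => (B u)⁻¹ i k) (𝓝[≠] t₀) (𝓝 ((B t₀)⁻¹ i k)) :=
      ((continuousAt_inv_entry hcont (hdet t₀) i k).tendsto).mono_left nhdsWithin_le_nhds
    have hb : Tendsto (fun u => ((u - t₀)⁻¹ • (B u - B t₀)) k l) (𝓝[≠] t₀) (𝓝 (B' k l)) := by
      have hs := hasDerivAt_iff_tendsto_slope.mp (hd k l)
      refine hs.congr fun u => ?_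
      rw [slope_def_module, Matrix.smul_apply, Matrix.sub_apply]
    exact (ha.mul hb).mul tendsto_const_nhds
  refine h2.congr' ?_
  filter_upwards [eventually_mem_nhdsWithin] with u hu
  have hu' : u - t₀ ≠ 0 := sub_ne_zero.mpr hu
  have hmat : (B u)⁻¹ - (B t₀)⁻¹ = -((B u)⁻¹ * (B u - B t₀) * (B t₀)⁻¹) := by
    have e1 : (B u)⁻¹ * (B u - B t₀) * (B t₀)⁻¹
        = (B u)⁻¹ * B u * (B t₀)⁻¹ - (B u)⁻¹ * B t₀ * (B t₀)⁻¹ := by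
      rw [Matrix.mul_sub, Matrix.sub_mul]
    rw [e1, hunit' u, Matrix.one_mul, Matrix.mul_assoc, hunit t₀, Matrix.mul_one, neg_sub]
  have : slope (fun v => (B v)⁻¹ i j) t₀ u
      = ((u - t₀)⁻¹ • ((B u)⁻¹ - (B t₀)⁻¹)) i j := by
    rw [slope_def_module, Matrix.smul_apply, Matrix.sub_apply]
  have hm2 : (u - t₀)⁻¹ • -((B u)⁻¹ * (B u - B t₀) * (B t₀)⁻¹)
      = -((B u)⁻¹ * ((u - t₀)⁻¹ • (B u - B t₀)) * (B t₀)⁻¹) := by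
    rw [Matrix.mul_smul, Matrix.smul_mul, smul_neg]
  rw [this, hmat, hm2, Matrix.neg_apply, mul3_apply]


lemma mlog_entry (hA : A.PosDef) (i j : Fin n) :
    mlog A i j = ∑ k, ((Real.log (hA.1.eigenvalues k) : ℝ) : ℂ)
      * ((evU hA.1) i k * star ((evU hA.1) j k)) := by
  unfold mlog
  rw [hA.1.cfc_eq, Matrix.IsHermitian.cfc, Unitary.conjStarAlgAut_apply, conjUnit_entry]
  simp [Function.comp_def]

lemma entry_repr (hA : A.PosDef) (i j : Fin n) (s : ℝ) (hs : 0 ≤ s) :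
    ((((1+s:ℝ)) : ℂ)⁻¹ • (1 : Matrix (Fin n) (Fin n) ℂ) - (A + (s : ℂ) • 1)⁻¹) i j
      = ∑ k, ((((1+s)⁻¹ - (hA.1.eigenvalues k + s)⁻¹ : ℝ)) : ℂ)
          * ((evU hA.1) i k * star ((evU hA.1) j k)) := by
  have hU1 : (evU hA.1) * star (evU hA.1) = 1 :=
    Matrix.mem_unitaryGroup_iff.mp (Matrix.IsHermitian.eigenvectorUnitary hA.1).2
  rw [shift_inv hA s hs, smul_one_eq (((1+s:ℝ)):ℂ)⁻¹ _ hU1, Matrix.sub_apply,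
    conjUnit_entry, conjUnit_entry, ← Finset.sum_sub_distrib]
  refine Finset.sum_congr rfl fun k _ => ?_
  rw [← sub_mul]
  congr 1
  push_cast
  ring

lemma integrand_integrable (hA : A.PosDef) (i j : Fin n) :
    IntegrableOn (fun s : ℝ =>
      ((((1+s:ℝ)) : ℂ)⁻¹ • (1 : Matrix (Fin n) (Fin n) ℂ) - (A + (s : ℂ) • 1)⁻¹) i j)
      (Set.Ioi 0) := by
  have hint : IntegrableOn (fun s : ℝ => ∑ k,
      ((((1+s)⁻¹ - (hA.1.eigenvalues k + s)⁻¹ : ℝ)) : ℂ)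
        * ((evU hA.1) i k * star ((evU hA.1) j k))) (Set.Ioi 0) := by
    apply MeasureTheory.integrable_finset_sum
    intro k _
    exact ((log_scalar (hA.eigenvalues_pos k)).1.ofReal).mul_const _
  exact hint.congr_fun (fun s hs => (entry_repr hA i j s (le_of_lt hs)).symm) measurableSet_Ioi

lemma integral_repr (hA : A.PosDef) (i j : Fin n) :
    ∫ s in Set.Ioi (0:ℝ),
        ((((1+s:ℝ)) : ℂ)⁻¹ • (1 : Matrix (Fin n) (Fin n) ℂ) - (A + (s : ℂ) • 1)⁻¹) i j
      = mlog A i j := by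
  rw [MeasureTheory.setIntegral_congr_fun measurableSet_Ioi
    (fun s hs => entry_repr hA i j s (le_of_lt hs))]
  have hsum := MeasureTheory.integral_finset_sum (μ := volume.restrict (Set.Ioi 0))
    Finset.univ (f := fun (k : Fin n) (s : ℝ) =>
      ((((1+s)⁻¹ - (hA.1.eigenvalues k + s)⁻¹ : ℝ)) : ℂ)
        * ((evU hA.1) i k * star ((evU hA.1) j k)))
    (fun k _ => ((log_scalar (hA.eigenvalues_pos k)).1.ofReal).mul_const _)
  rw [hsum, mlog_entry hA i j]
  refine Finset.sum_congr rfl fun k _ => ?_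
  rw [MeasureTheory.integral_mul_const]
  congr 1
  calc ∫ a in Set.Ioi (0:ℝ), (((1 + a)⁻¹ - (hA.1.eigenvalues k + a)⁻¹ : ℝ) : ℂ)
      = (((∫ a in Set.Ioi (0:ℝ), ((1 + a)⁻¹ - (hA.1.eigenvalues k + a)⁻¹)) : ℝ) : ℂ) :=
        integral_ofReal
    _ = _ := by rw [(log_scalar (hA.eigenvalues_pos k)).2]

lemma det_shift_ne (hA : A.PosDef) {s : ℝ} (hs : 0 ≤ s) :
    (A + (s : ℂ) • (1 : Matrix (Fin n) (Fin n) ℂ)).det ≠ 0 :=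
  left_ne_zero_of_mul_eq_one (by rw [← Matrix.det_mul, shift_mul_inv hA s hs, Matrix.det_one])

end MlogProof

open MlogProof

/-- If `t ↦ σ t` is a C¹ curve of positive definite matrices (given entrywise by having
derivative `σ' t` with `σ'` continuous), then `d/dt log σ_t = T_{σ_t}(σ̇_t)` (entrywise). -/
theorem hasDerivAt_mlog {n : ℕ} (σ σ' : ℝ → Matrix (Fin n) (Fin n) ℂ)
    (hderiv : ∀ t (i j : Fin n), HasDerivAt (fun u => σ u i j) (σ' t i j) t)
    (hcont : ∀ i j : Fin n, Continuous fun t => σ' t i j)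
    (hpos : ∀ t, (σ t).PosDef) :
    ∀ t (i j : Fin n),
      HasDerivAt (fun u => mlog (σ u) i j) ((Tmap (σ t) (σ' t)) i j) t := by
  intro t i j
  have hne : Nonempty (Fin n) := ⟨i⟩
  classical
  -- continuity of entries of σ
  have hσc : ∀ k l : Fin n, Continuous fun u => σ u k l := fun k l =>
    continuous_iff_continuousAt.mpr fun u => (hderiv u k l).continuousAt
  -- continuity of u ↦ σ u + s•1 (for fixed s)
  have hBc : ∀ s : ℝ, Continuous fun u => σ u + (s : ℂ) • (1 : Matrix (Fin n) (Fin n) ℂ) := by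
    intro s
    apply continuous_matrix
    intro k l
    have : (fun u => (σ u + (s : ℂ) • (1 : Matrix (Fin n) (Fin n) ℂ)) k l)
        = fun u => σ u k l + ((s : ℂ) • (1 : Matrix (Fin n) (Fin n) ℂ)) k l := by
      funext u; rw [Matrix.add_apply]
    rw [this]
    exact (hσc k l).add continuous_const
  -- continuity of s ↦ σ u + s•1 (for fixed u)
  have hBs : ∀ u : ℝ, Continuous fun s : ℝ => σ u + (s : ℂ) • (1 : Matrix (Fin n) (Fin n) ℂ) := by
    intro u
    apply continuous_matrix
    intro k l
    have : (fun s : ℝ => (σ u + (s : ℂ) • (1 : Matrix (Fin n) (Fin n) ℂ)) k l)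
        = fun s : ℝ => σ u k l + (s : ℂ) * (1 : Matrix (Fin n) (Fin n) ℂ) k l := by
      funext s; rw [Matrix.add_apply, Matrix.smul_apply, smul_eq_mul]
    rw [this]
    exact continuous_const.add (Complex.continuous_ofReal.mul continuous_const)
  -- continuity (in s) of resolvent entries on Ioi 0
  have hRcont : ∀ u : ℝ, ∀ k l : Fin n,
      ContinuousOn (fun s : ℝ => (σ u + (s : ℂ) • (1 : Matrix (Fin n) (Fin n) ℂ))⁻¹ k l)
        (Set.Ioi 0) := by
    intro u k l s hs
    exact (continuousAt_inv_entry (hBs u) (det_shift_ne (hpos u) (le_of_lt hs)) k l).continuousWithinAt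
  -- minimal eigenvalue of σ t
  set c : ℝ := Finset.univ.inf' Finset.univ_nonempty (fun k => (hpos t).1.eigenvalues k) with hcdef
  have hc0 : 0 < c := by
    rw [hcdef, Finset.lt_inf'_iff]
    exact fun k _ => (hpos t).eigenvalues_pos k
  have hq_t : ∀ x : Fin n → ℂ,
      c * ∑ i', Complex.normSq (x i') ≤ (star x ⬝ᵥ σ t *ᵥ x).re :=
    quad_lower (hpos t) c (fun k => Finset.inf'_le _ (Finset.mem_univ k))
  -- perturbation control
  set g : ℝ → ℝ := fun u => ∑ p : Fin n × Fin n, ‖σ u p.1 p.2 - σ t p.1 p.2‖ with hgdef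
  have hgc : Continuous g := by
    apply continuous_finset_sum
    intro p _
    exact continuous_norm.comp ((hσc p.1 p.2).sub continuous_const)
  have hg0 : g t = 0 := by simp [hgdef]
  obtain ⟨ε, hε0, hε⟩ : ∃ ε > 0, ∀ u, dist u t < ε → g u < c / 2 := by
    obtain ⟨δ, hδ0, hδ⟩ := Metric.continuousAt_iff.mp hgc.continuousAt (c / 2) (half_pos hc0)
    refine ⟨δ, hδ0, fun u hu => ?_⟩
    have := hδ hu
    rw [hg0, Real.dist_eq, sub_zero] at this
    exact lt_of_le_of_lt (le_abs_self _) this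
  -- quadratic lower bound on the ball
  have hq_ball : ∀ u ∈ Metric.ball t ε, ∀ x : Fin n → ℂ,
      (c / 2) * ∑ i', Complex.normSq (x i') ≤ (star x ⬝ᵥ σ u *ᵥ x).re := by
    intro u hu x
    set S : ℝ := ∑ i', Complex.normSq (x i') with hS
    have hS0 : 0 ≤ S := Finset.sum_nonneg fun _ _ => Complex.normSq_nonneg _
    have hst : σ t + (σ u - σ t) = σ u := by abel
    have hsplit : star x ⬝ᵥ σ u *ᵥ x = star x ⬝ᵥ σ t *ᵥ x + star x ⬝ᵥ (σ u - σ t) *ᵥ x := by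
      calc star x ⬝ᵥ σ u *ᵥ x = star x ⬝ᵥ (σ t + (σ u - σ t)) *ᵥ x := by rw [hst]
        _ = _ := by rw [Matrix.add_mulVec, dotProduct_add]
    have hpert := quad_pert (σ u - σ t) x
    have hgu : g u < c / 2 := hε u (Metric.mem_ball.mp hu)
    have hgnn : 0 ≤ g u := Finset.sum_nonneg fun _ _ => norm_nonneg _
    have h1 : |(star x ⬝ᵥ (σ u - σ t) *ᵥ x).re| ≤ (c / 2) * S := by
      refine le_trans ?_ (mul_le_mul_of_nonneg_right (le_of_lt hgu) hS0)
      simpa [hgdef, Matrix.sub_apply] using hpert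
    have h2 := hq_t x
    rw [hsplit, Complex.add_re]
    have := abs_le.mp h1
    linarith
  -- resolvent entry bound on the ball
  have hres : ∀ u ∈ Metric.ball t ε, ∀ s : ℝ, 0 < s → ∀ k l : Fin n,
      ‖(σ u + (s : ℂ) • (1 : Matrix (Fin n) (Fin n) ℂ))⁻¹ k l‖
        ≤ (c / 2 + s)⁻¹ := by
    intro u hu s hs k l
    have hcs : (0:ℝ) < c / 2 + s := by positivity
    refine inv_entry_bound (shift_mul_inv (hpos u) s (le_of_lt hs)) hcs ?_ k l
    intro x
    set S : ℝ := ∑ i', Complex.normSq (x i') with hS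
    have hq1 : star x ⬝ᵥ (σ u + (s : ℂ) • (1 : Matrix (Fin n) (Fin n) ℂ)) *ᵥ x
        = star x ⬝ᵥ σ u *ᵥ x + (s : ℂ) * ((S : ℝ) : ℂ) := by
      rw [Matrix.add_mulVec, dotProduct_add, Matrix.smul_mulVec,
        Matrix.one_mulVec, dotProduct_smul, star_dot_self, smul_eq_mul]
    rw [hq1, Complex.add_re, ← Complex.ofReal_mul, Complex.ofReal_re]
    have := hq_ball u hu x
    rw [← hS] at this
    nlinarith [this]
  -- bound on σ' entries locally
  set h : ℝ → ℝ := fun u => ∑ p : Fin n × Fin n, ‖σ' u p.1 p.2‖ with hhdef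
  have hhc : Continuous h := by
    apply continuous_finset_sum
    intro p _
    exact continuous_norm.comp (hcont p.1 p.2)
  obtain ⟨M, hM⟩ : ∃ M, ∀ u ∈ Metric.ball t ε, h u ≤ M := by
    obtain ⟨x₀, hx₀mem, hx₀⟩ := (isCompact_Icc (a := t - ε) (b := t + ε)).exists_isMaxOn
      ⟨t, by constructor <;> simp <;> linarith⟩ hhc.continuousOn
    refine ⟨h x₀, fun u hu => ?_⟩
    have hu' : u ∈ Set.Icc (t - ε) (t + ε) := by
      have := Metric.mem_ball.mp hu
      rw [Real.dist_eq, abs_lt] at this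
      constructor <;> linarith [this.1, this.2]
    exact hx₀ hu'
  -- the functions F and F'
  set F : ℝ → ℝ → ℂ := fun u s =>
    ((((1 + s : ℝ)) : ℂ)⁻¹ • (1 : Matrix (Fin n) (Fin n) ℂ)
      - (σ u + (s : ℂ) • 1)⁻¹) i j with hFdef
  set F' : ℝ → ℝ → ℂ := fun u s =>
    ((σ u + (s : ℂ) • (1 : Matrix (Fin n) (Fin n) ℂ))⁻¹ * σ' u
      * (σ u + (s : ℂ) • (1 : Matrix (Fin n) (Fin n) ℂ))⁻¹) i j with hF'def
  -- measurability
  have hmeasF : ∀ u : ℝ, AEStronglyMeasurable (F u) (volume.restrict (Set.Ioi 0)) := by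
    intro u
    apply ContinuousOn.aestronglyMeasurable ?_ measurableSet_Ioi
    have hFu : F u = fun s : ℝ => (((1 + s : ℝ)) : ℂ)⁻¹ * (1 : Matrix (Fin n) (Fin n) ℂ) i j
        - (σ u + (s : ℂ) • 1)⁻¹ i j := by
      funext s
      simp only [hFdef, Matrix.sub_apply, Matrix.smul_apply, smul_eq_mul]
    rw [hFu]
    apply ContinuousOn.sub
    · apply ContinuousOn.mul ?_ continuousOn_const
      apply ContinuousOn.inv₀
      · exact (Complex.continuous_ofReal.comp (continuous_const.add continuous_id)).continuousOn
      · intro s hs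
        have hs' : (0:ℝ) < s := hs
        exact Complex.ofReal_ne_zero.mpr (by positivity)
    · exact hRcont u i j
  have hmeasF' : AEStronglyMeasurable (F' t) (volume.restrict (Set.Ioi 0)) := by
    apply ContinuousOn.aestronglyMeasurable ?_ measurableSet_Ioi
    have hFt : F' t = fun s : ℝ => ∑ l, ∑ k,
        (σ t + (s : ℂ) • (1 : Matrix (Fin n) (Fin n) ℂ))⁻¹ i k * σ' t k l
          * (σ t + (s : ℂ) • (1 : Matrix (Fin n) (Fin n) ℂ))⁻¹ l j := by
      funext s
      simp only [hF'def]
      rw [mul3_apply]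
    rw [hFt]
    apply continuousOn_finset_sum
    intro l _
    apply continuousOn_finset_sum
    intro k _
    exact ((hRcont t i k).mul continuousOn_const).mul (hRcont t l j)
  set bound : ℝ → ℝ := fun s => M * ((c / 2 + s) ^ 2)⁻¹ with hbdef
  have hbound_int : IntegrableOn bound (Set.Ioi 0) :=
    (integrableOn_inv_sq (half_pos hc0)).const_mul M
  have h_bound : ∀ᵐ s ∂(volume.restrict (Set.Ioi 0)), ∀ u ∈ Metric.ball t ε,
      ‖F' u s‖ ≤ bound s := by
    filter_upwards [ae_restrict_mem measurableSet_Ioi] with s hs u hu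
    have hs' : (0:ℝ) < s := hs
    have hcs : (0:ℝ) < c / 2 + s := by positivity
    have hRb := hres u hu s hs'
    have habs : ‖F' u s‖ = ‖F' u s‖ := rfl
    have hexp : F' u s = ∑ l, ∑ k,
        (σ u + (s : ℂ) • (1 : Matrix (Fin n) (Fin n) ℂ))⁻¹ i k * σ' u k l
          * (σ u + (s : ℂ) • (1 : Matrix (Fin n) (Fin n) ℂ))⁻¹ l j := by
      simp only [hF'def]
      rw [mul3_apply]
    rw [habs, hexp]
    calc ‖∑ l, ∑ k,
          (σ u + (s : ℂ) • (1 : Matrix (Fin n) (Fin n) ℂ))⁻¹ i k * σ' u k l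
            * (σ u + (s : ℂ) • (1 : Matrix (Fin n) (Fin n) ℂ))⁻¹ l j‖
        ≤ ∑ l, ∑ k, ‖
            (σ u + (s : ℂ) • (1 : Matrix (Fin n) (Fin n) ℂ))⁻¹ i k * σ' u k l
              * (σ u + (s : ℂ) • (1 : Matrix (Fin n) (Fin n) ℂ))⁻¹ l j‖ := by
          refine le_trans (norm_sum_le _ _) (Finset.sum_le_sum fun l _ => ?_)
          exact norm_sum_le _ _
      _ ≤ ∑ l, ∑ k, (c / 2 + s)⁻¹ * ‖σ' u k l‖ * (c / 2 + s)⁻¹ := by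
          refine Finset.sum_le_sum fun l _ => Finset.sum_le_sum fun k _ => ?_
          rw [norm_mul, norm_mul]
          have h1 := hRb i k
          have h2 := hRb l j
          refine mul_le_mul (mul_le_mul_of_nonneg_right h1 (norm_nonneg _)) h2
            (norm_nonneg _) ?_
          exact mul_nonneg (inv_nonneg.mpr (le_of_lt hcs)) (norm_nonneg _)
      _ = ((c / 2 + s) ^ 2)⁻¹ * ∑ l, ∑ k, ‖σ' u k l‖ := by
          rw [Finset.mul_sum]
          refine Finset.sum_congr rfl fun l _ => ?_
          rw [Finset.mul_sum]
          refine Finset.sum_congr rfl fun k _ => ?_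
          rw [sq, mul_inv]
          ring
      _ ≤ ((c / 2 + s) ^ 2)⁻¹ * M := by
          refine mul_le_mul_of_nonneg_left ?_ (by positivity)
          have hsum : ∑ l, ∑ k, ‖σ' u k l‖ = h u := by
            simp only [hhdef]
            rw [Fintype.sum_prod_type]
            exact Finset.sum_comm
          rw [hsum]
          exact hM u hu
      _ = bound s := by rw [hbdef]; ring
  have h_diff : ∀ᵐ s ∂(volume.restrict (Set.Ioi 0)), ∀ u ∈ Metric.ball t ε,
      HasDerivAt (fun v => F v s) (F' u s) u := by
    filter_upwards [ae_restrict_mem measurableSet_Ioi] with s hs u _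
    have hs0 : (0:ℝ) ≤ s := le_of_lt (show (0:ℝ) < s from hs)
    have hBd : ∀ k l : Fin n, HasDerivAt
        (fun v => (σ v + (s : ℂ) • (1 : Matrix (Fin n) (Fin n) ℂ)) k l) (σ' u k l) u := by
      intro k l
      have h0 := (hderiv u k l).add_const (((s : ℂ) • (1 : Matrix (Fin n) (Fin n) ℂ)) k l)
      have heq : (fun v => σ v k l + ((s : ℂ) • (1 : Matrix (Fin n) (Fin n) ℂ)) k l)
          = fun v => (σ v + (s : ℂ) • (1 : Matrix (Fin n) (Fin n) ℂ)) k l := by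
        funext v; rw [Matrix.add_apply]
      rwa [heq] at h0
    have hinv := hasDerivAt_inv_entry (fun v => σ v + (s : ℂ) • 1) (σ' u) u (hBc s) hBd
      (fun v => shift_mul_inv (hpos v) s hs0) i j
    have hconst : HasDerivAt (fun _ : ℝ =>
        ((((1 + s : ℝ)) : ℂ)⁻¹ • (1 : Matrix (Fin n) (Fin n) ℂ)) i j) 0 u :=
      hasDerivAt_const _ _
    have hsub := hconst.sub hinv
    have hfun : (fun v => ((((1 + s : ℝ)) : ℂ)⁻¹ • (1 : Matrix (Fin n) (Fin n) ℂ)) i j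
        - (σ v + (s : ℂ) • 1)⁻¹ i j) = fun v => F v s := by
      funext v; simp only [hFdef, Matrix.sub_apply]
    rw [← hfun]
    have hval : 0 - (-(((σ u + (s : ℂ) • (1 : Matrix (Fin n) (Fin n) ℂ))⁻¹ * σ' u *
        (σ u + (s : ℂ) • (1 : Matrix (Fin n) (Fin n) ℂ))⁻¹) i j)) = F' u s := by
      simp only [hF'def]
      ring
    rwa [hval] at hsub
  have main := (hasDerivAt_integral_of_dominated_loc_of_deriv_le (F := F) (F' := F')
    (μ := volume.restrict (Set.Ioi 0)) (Metric.ball_mem_nhds t hε0)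
    (Filter.Eventually.of_forall hmeasF) (integrand_integrable (hpos t) i j) hmeasF'
    h_bound hbound_int h_diff).2
  have hfun2 : (fun u => mlog (σ u) i j) = fun u => ∫ s in Set.Ioi (0:ℝ), F u s :=
    funext fun u => (integral_repr (hpos u) i j).symm
  have hTm : (Tmap (σ t) (σ' t)) i j = ∫ s in Set.Ioi (0:ℝ), F' t s := rfl
  rw [hfun2, hTm]
  exact main
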